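/- Let {X_1,...,X_m} be a set of mutually uncorrelated words of length n over a 4-letter alphabet, and let f(N) (with f(0)=1) be the number of words of length N containing none of X_1,...,X_m as a substring. Then the generating function F(z) = ∑_{N≥0} f(N) z^{-N} equals z^n / (m + (z−4) z^{n−1}). -/

import Mathlib

/-- A word `X` is self-uncorrelated if no proper nonempty prefix of `X`
is also a suffix of `X`. -/
def selfUncorr {α : Type*} (X : List α) : Prop :=
  ∀ k : ℕ, 0 < k → k < X.length → X.take k ≠ X.drop (X.length - k)

/-- A set of words is mutually uncorrelated if each word is self-uncorrelated and
for any two distinct words, no nonempty prefix of one equals a suffix of the other. -/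
def mutUncorr {α : Type*} (S : Set (List α)) : Prop :=
  (∀ X ∈ S, selfUncorr X) ∧
  ∀ X ∈ S, ∀ Y ∈ S, X ≠ Y →
    ∀ k : ℕ, 0 < k → k ≤ X.length → k ≤ Y.length →
      X.take k ≠ Y.drop (Y.length - k)

open scoped Classical

def AvS (S : Finset (List (Fin 4))) (l : List (Fin 4)) : Prop := ∀ X ∈ S, ¬ X <:+: l

noncomputable def EN (N : ℕ) : Finset (List (Fin 4)) :=
  (Finset.univ : Finset (Fin N → Fin 4)).image List.ofFn

lemma mem_EN {N : ℕ} {l : List (Fin 4)} : l ∈ EN N ↔ l.length = N := by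
  constructor
  · rintro hl
    simp only [EN, Finset.mem_image] at hl
    obtain ⟨w, -, rfl⟩ := hl
    simp
  · intro hl
    simp only [EN, Finset.mem_image]
    refine ⟨fun i => l.get (Fin.cast hl.symm i), Finset.mem_univ _, ?_⟩
    subst hl
    simp [List.ofFn_get]

lemma card_EN (N : ℕ) : (EN N).card = 4 ^ N := by
  rw [EN, Finset.card_image_of_injective _ List.ofFn_injective]
  simp

lemma AvS_of_prefix {S : Finset (List (Fin 4))} {l l' : List (Fin 4)}
    (h : AvS S l) (hp : l' <+: l) : AvS S l' := by
  intro X hX hX'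
  exact h X hX (hX'.trans hp.isInfix)

/-- Key lemma: appending a pattern to an avoiding word, the first N-1 letters avoid. -/
lemma key {n : ℕ} (hn : 0 < n) {S : Finset (List (Fin 4))}
    (hlen : ∀ X ∈ S, X.length = n) (h : mutUncorr (↑S : Set (List (Fin 4))))
    {u X : List (Fin 4)} (hu : AvS S u) (hX : X ∈ S) :
    AvS S (u ++ X.take (n - 1)) := by
  intro Y hY hinf
  obtain ⟨s, t, hst⟩ := hinf
  have hXn : X.length = n := hlen X hX
  have hYn : Y.length = n := hlen Y hY
  have hvlen : (X.take (n-1)).length = n - 1 := by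
    rw [List.length_take, hXn]; omega
  have hlens : s.length + n + t.length = u.length + (n - 1) := by
    have := congrArg List.length hst
    simp only [List.length_append, hYn, hvlen] at this
    omega
  by_cases hcase : s.length + n ≤ u.length
  · -- Y entirely within u
    have h1 : s ++ Y <+: u ++ X.take (n-1) := ⟨t, hst⟩
    have h2 : s ++ Y <+: u := by
      refine List.prefix_of_prefix_length_le h1 (List.prefix_append u _) ?_
      rw [List.length_append, hYn]; omega
    exact hu Y hY ((List.suffix_append s Y).isInfix.trans h2.isInfix)
  · push_neg at hcase
    set k := s.length + n - u.length with hk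
    have hk0 : 0 < k := by omega
    have hkn : k ≤ n - 1 := by omega
    have hYeq : Y = ((u ++ X.take (n-1)).take (s.length + n)).drop s.length := by
      rw [← hst, List.take_left' (by rw [List.length_append, hYn]), List.drop_left]
    have hdrop : Y.drop (Y.length - k) = X.take k := by
      rw [hYn, hYeq, List.drop_drop, List.drop_take]
      have h1 : s.length + (n - k) = u.length := by omega
      rw [h1, List.drop_left]
      have h2 : s.length + n - u.length = k := by omega
      rw [h2, List.take_take]
      congr 1
      omega
    by_cases hXY : X = Y
    · subst hXY
      exact h.1 X hX k hk0 (by omega) hdrop.symm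
    · exact h.2 X hX Y hY hXY k hk0 (by omega) (by omega) hdrop.symm

/-- If a pattern occurs in l (length N) but not in its first N-1 letters,
it is exactly the suffix of length n. -/
lemma endX {n N : ℕ} {S : Finset (List (Fin 4))}
    (hlen : ∀ X ∈ S, X.length = n) (hN : n ≤ N)
    {l X : List (Fin 4)} (hl : l.length = N) (hX : X ∈ S)
    (hinf : X <:+: l) (hAvp : AvS S (l.take (N-1))) : X = l.drop (N - n) := by
  obtain ⟨s, t, hst⟩ := hinf
  have hXn : X.length = n := hlen X hX
  have hlens : s.length + n + t.length = N := by
    have := congrArg List.length hst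
    simp only [List.length_append, hXn, hl] at this
    omega
  by_cases hcase : s.length + n ≤ N - 1
  · exfalso
    have h1 : s ++ X <+: l := ⟨t, hst⟩
    obtain ⟨r, hr⟩ := h1
    have hle : (s ++ X).length ≤ N - 1 := by rw [List.length_append, hXn]; omega
    have h2 : l.take (N-1) = (s ++ X) ++ r.take (N - 1 - (s.length + n)) := by
      rw [← hr, List.take_append, List.take_of_length_le hle,
        List.length_append, hXn]
    exact hAvp X hX ⟨s, _, h2.symm⟩
  · have ht : t = [] := by
      have : t.length = 0 := by omega
      exact List.eq_nil_of_length_eq_zero this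
    have hs : s.length = N - n := by omega
    rw [ht, List.append_nil] at hst
    rw [← hst, List.drop_left' hs]

open scoped Classical in
/-- Let `f N` be the number of words of length `N` over a 4-letter alphabet avoiding
`m` mutually uncorrelated patterns of length `n` as substrings. Then `f N = 4^N` for
`N < n` and `f N = 4·f (N−1) − m·f (N−n)` for `N ≥ n`; this is equivalent to the
generating function identity `F(z) = zⁿ/(m + (z−4)z^{n−1})`. -/
theorem stmt7 (n m : ℕ) (hn : 0 < n) (S : Finset (List (Fin 4)))
    (hcard : S.card = m) (hlen : ∀ X ∈ S, X.length = n)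
    (h : mutUncorr (↑S : Set (List (Fin 4))))
    (f : ℕ → ℕ)
    (hf : ∀ N : ℕ, f N = (Finset.univ.filter
      (fun w : Fin N → Fin 4 => ∀ X ∈ S, ¬ X <:+: List.ofFn w)).card) :
    (∀ N < n, f N = 4 ^ N) ∧
    ∀ N, n ≤ N → f N + m * f (N - n) = 4 * f (N - 1) := by
  have hg : ∀ N, f N = ((EN N).filter (AvS S)).card := by
    intro N
    have e1 : (Finset.univ.filter
        (fun w : Fin N → Fin 4 => ∀ X ∈ S, ¬ X <:+: List.ofFn w))
        = Finset.univ.filter (fun w : Fin N → Fin 4 => AvS S (List.ofFn w)) :=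
      Finset.filter_congr (fun x _ => Iff.rfl)
    rw [hf N, e1, EN, Finset.filter_image,
      Finset.card_image_of_injective _ List.ofFn_injective]
  constructor
  · intro N hNn
    rw [hg N, Finset.filter_true_of_mem, card_EN]
    intro l hl X hX hinf
    have := hinf.length_le
    rw [hlen X hX, mem_EN.mp hl] at this
    omega
  · intro N hNn
    set P : Finset (List (Fin 4)) :=
      (EN N).filter (fun l => AvS S (l.take (N-1))) with hP
    -- Claim 1 : P.card = 4 * f (N-1)
    have claim1 : P.card = 4 * f (N - 1) := by
      rw [hg (N-1)]
      have e2 : P.card = (((EN (N-1)).filter (AvS S)) ×ˢ (Finset.univ : Finset (Fin 4))).card := by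
        refine Finset.card_bij'
          (fun l hl => (l.take (N-1), l.get ⟨N-1, by
            rw [mem_EN.mp (Finset.mem_filter.mp hl).1]; omega⟩))
          (fun p _ => p.1 ++ [p.2]) ?_ ?_ ?_ ?_
        · intro l hl
          obtain ⟨hlE, hlAv⟩ := Finset.mem_filter.mp hl
          have hlN := mem_EN.mp hlE
          refine Finset.mem_product.mpr ⟨Finset.mem_filter.mpr
            ⟨mem_EN.mpr (by rw [List.length_take, hlN]; omega), hlAv⟩, Finset.mem_univ _⟩
        · intro p hp
          rw [Finset.mem_product] at hp
          obtain ⟨h1, -⟩ := hp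
          obtain ⟨h1E, h1Av⟩ := Finset.mem_filter.mp h1
          have hl1 : p.1.length = N - 1 := mem_EN.mp h1E
          refine Finset.mem_filter.mpr ⟨mem_EN.mpr
            (by simp only [List.length_append, List.length_cons, List.length_nil, hl1]; omega), ?_⟩
          rw [List.take_left' hl1]
          exact h1Av
        · intro l hl
          obtain ⟨hlE, -⟩ := Finset.mem_filter.mp hl
          have hlN : l.length = N := mem_EN.mp hlE
          simp only [List.get_eq_getElem]
          have e3 := List.take_concat_get (by omega : N-1 < l.length)
          rw [List.concat_eq_append] at e3
          rw [e3, show N - 1 + 1 = N by omega, ← hlN, List.take_length]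
        · intro p hp
          rw [Finset.mem_product] at hp
          obtain ⟨h1, -⟩ := hp
          have hl1 : p.1.length = N - 1 := mem_EN.mp (Finset.mem_filter.mp h1).1
          refine Prod.ext ?_ ?_
          · exact List.take_left' hl1
          · simp only [List.get_eq_getElem]
            rw [List.getElem_append_right (by omega)]
            simp [hl1]
      rw [e2, Finset.card_product]
      simp [mul_comm]
    have hsplit : (P.filter (AvS S)).card + (P.filter (fun l => ¬ AvS S l)).card = P.card :=
      Finset.card_filter_add_card_filter_not _
    have hPAv : P.filter (AvS S) = (EN N).filter (AvS S) := by
      rw [hP, Finset.filter_filter]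
      apply Finset.filter_congr
      intro l hl
      constructor
      · rintro ⟨-, h2⟩; exact h2
      · intro h2
        exact ⟨AvS_of_prefix h2 (List.take_prefix _ _), h2⟩
    -- Claim 3
    have claim3 : (P.filter (fun l => ¬ AvS S l)).card = m * f (N - n) := by
      rw [hg (N-n), ← hcard, ← Finset.card_product]
      refine Finset.card_bij'
        (fun l _ => (l.drop (N-n), l.take (N-n)))
        (fun p _ => p.2 ++ p.1) ?_ ?_ ?_ ?_
      · intro l hl
        obtain ⟨hlP, hlnAv⟩ := Finset.mem_filter.mp hl
        obtain ⟨hlE, hlAv⟩ := Finset.mem_filter.mp hlP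
        have hlN : l.length = N := mem_EN.mp hlE
        simp only [AvS, not_forall, not_not] at hlnAv
        obtain ⟨X, hX, hinf⟩ := hlnAv
        have hXend := endX hlen hNn hlN hX hinf hlAv
        have htp : l.take (N-n) <+: l.take (N-1) := by
          have e4 : l.take (N-n) = (l.take (N-1)).take (N-n) := by
            rw [List.take_take]; congr 1; omega
          rw [e4]; exact List.take_prefix _ _
        refine Finset.mem_product.mpr ⟨?_, ?_⟩
        · show l.drop (N-n) ∈ S
          rw [← hXend]; exact hX
        · exact Finset.mem_filter.mpr ⟨mem_EN.mpr
            (by rw [List.length_take, hlN]; omega), AvS_of_prefix hlAv htp⟩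
      · intro p hp
        rw [Finset.mem_product] at hp
        obtain ⟨hX, h2⟩ := hp
        obtain ⟨h2E, h2Av⟩ := Finset.mem_filter.mp h2
        have hulen : p.2.length = N - n := mem_EN.mp h2E
        have hXn : p.1.length = n := hlen _ hX
        refine Finset.mem_filter.mpr ⟨Finset.mem_filter.mpr
          ⟨mem_EN.mpr (by rw [List.length_append, hulen, hXn]; omega), ?_⟩, ?_⟩
        · have e5 : (p.2 ++ p.1).take (N-1) = p.2 ++ p.1.take (n-1) := by
            rw [List.take_append,
              List.take_of_length_le (by omega), hulen,
              show N - 1 - (N - n) = n - 1 by omega]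
          show AvS S ((p.2 ++ p.1).take (N-1))
          rw [e5]
          exact key hn hlen h h2Av hX
        · show ¬ AvS S (p.2 ++ p.1)
          intro hAv
          exact hAv p.1 hX ⟨p.2, [], by simp⟩
      · intro l hl
        simp [List.take_append_drop]
      · intro p hp
        rw [Finset.mem_product] at hp
        have hulen : p.2.length = N - n := mem_EN.mp (Finset.mem_filter.mp hp.2).1
        refine Prod.ext ?_ ?_
        · exact List.drop_left' hulen
        · exact List.take_left' hulen
    rw [hg N, ← hPAv]
    omega
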